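/- Define planar rooted trees inductively: a planar rooted tree is either a leaf, or an internal node carrying an ordered list of at least two planar rooted subtrees. Fix n ≥ 2 and natural numbers λ₁, …, λ_{n-1}, and set Λ = λ₁ + ⋯ + λ_{n-1} and N = 1 + λ₁ + 2λ₂ + ⋯ + (n-1)λ_{n-1}. The set of planar rooted trees that have, for each i with 1 ≤ i ≤ n-1, exactly λ_i internal nodes with exactly i+1 children, and no internal nodes with more than n children, is finite; any such tree has exactly N leaves, and the cardinality c of this set satisfies N · c · λ₁! ⋯ λ_{n-1}! = C(N+Λ-1, Λ) · Λ!. -/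

import Mathlib

attribute [local instance 2000] instBEqOfDecidableEq


/-- A planar rooted tree: either a leaf, or an internal node carrying an ordered list of
at least two planar rooted subtrees (encoded as the first two children together with the
list of the remaining children). -/
inductive PlanarTree : Type where
  | leaf : PlanarTree
  | node : PlanarTree → PlanarTree → List PlanarTree → PlanarTree

/-- The number of leaves of a planar rooted tree. -/
def PlanarTree.leaves : PlanarTree → ℕ
  | .leaf => 1
  | .node t₁ t₂ rest => t₁.leaves + t₂.leaves + (rest.attach.map fun x => x.1.leaves).sum
decreasing_by
  · simp_wf; omega
  · simp_wf; omega
  · simp_wf; have := List.sizeOf_lt_of_mem x.2; omega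

/-- The number of internal nodes of a planar rooted tree. -/
def PlanarTree.inodes : PlanarTree → ℕ
  | .leaf => 0
  | .node t₁ t₂ rest => 1 + t₁.inodes + t₂.inodes + (rest.attach.map fun x => x.1.inodes).sum
decreasing_by
  · simp_wf; omega
  · simp_wf; omega
  · simp_wf; have := List.sizeOf_lt_of_mem x.2; omega

/-- The number of internal nodes of a planar rooted tree having exactly `k` children. -/
def PlanarTree.arityCount (k : ℕ) : PlanarTree → ℕ
  | .leaf => 0
  | .node t₁ t₂ rest =>
      (if rest.length + 2 = k then 1 else 0) + t₁.arityCount k + t₂.arityCount k +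
        (rest.attach.map fun x => x.1.arityCount k).sum
decreasing_by
  · simp_wf; omega
  · simp_wf; omega
  · simp_wf; have := List.sizeOf_lt_of_mem x.2; omega


namespace PlanarTree

/-- preorder code of a tree -/
def code : PlanarTree → List ℕ
  | .leaf => [0]
  | .node t₁ t₂ rest =>
      (rest.length + 2) :: (t₁.code ++ t₂.code ++ (rest.attach.map fun x => x.1.code).flatten)
decreasing_by
  · simp_wf; omega
  · simp_wf; omega
  · simp_wf; have := List.sizeOf_lt_of_mem x.2; omega

/-- code of a list of trees -/
def codes (ts : List PlanarTree) : List ℕ := (ts.map code).flatten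

@[simp] lemma codes_nil : codes [] = [] := rfl
@[simp] lemma codes_cons (t : PlanarTree) (ts : List PlanarTree) :
    codes (t :: ts) = t.code ++ codes ts := rfl
lemma codes_append (ts us : List PlanarTree) : codes (ts ++ us) = codes ts ++ codes us := by
  simp [codes]

lemma code_leaf : code .leaf = [0] := by rw [code]

lemma code_node (t₁ t₂ : PlanarTree) (rest : List PlanarTree) :
    code (.node t₁ t₂ rest) = (rest.length + 2) :: codes (t₁ :: t₂ :: rest) := by
  rw [code, codes]
  simp [List.attach_map_val]

lemma leaves_node (t₁ t₂ : PlanarTree) (rest : List PlanarTree) :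
    leaves (.node t₁ t₂ rest) = t₁.leaves + t₂.leaves + (rest.map leaves).sum := by
  rw [leaves, List.attach_map_val]

lemma arityCount_node (k : ℕ) (t₁ t₂ : PlanarTree) (rest : List PlanarTree) :
    arityCount k (.node t₁ t₂ rest) = (if rest.length + 2 = k then 1 else 0) +
      t₁.arityCount k + t₂.arityCount k + (rest.map (arityCount k)).sum := by
  rw [arityCount, List.attach_map_val]

end PlanarTree

namespace PlanarTree

lemma sizeOf_list_lt (l : List PlanarTree) : (l.map sizeOf).sum < sizeOf l := by
  induction l with
  | nil => simp
  | cons a l ih => simp only [List.map_cons, List.sum_cons, List.cons.sizeOf_spec]; omega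

/-- custom induction principle for lists of trees -/
lemma list_ind (P : List PlanarTree → Prop)
    (hnil : P [])
    (hleaf : ∀ ts, P ts → P (.leaf :: ts))
    (hnode : ∀ t₁ t₂ r ts, P (t₁ :: t₂ :: (r ++ ts)) → P (.node t₁ t₂ r :: ts)) :
    ∀ ts, P ts := by
  suffices h : ∀ n ts, (List.map sizeOf ts).sum ≤ n → P ts from fun ts => h _ ts le_rfl
  intro n
  induction n using Nat.strong_induction_on with
  | _ n ih =>
    intro ts hts
    match ts with
    | [] => exact hnil
    | .leaf :: ts =>
      have h1 : (List.map sizeOf ts).sum < n := by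
        simp only [List.map_cons, List.sum_cons, PlanarTree.leaf.sizeOf_spec] at hts; omega
      exact hleaf ts (ih _ h1 ts le_rfl)
    | .node t₁ t₂ r :: ts =>
      have hr := sizeOf_list_lt r
      have h1 : (List.map sizeOf (t₁ :: t₂ :: (r ++ ts))).sum < n := by
        simp only [List.map_cons, List.sum_cons, List.map_append, List.sum_append,
          PlanarTree.node.sizeOf_spec] at hts ⊢
        omega
      exact hnode t₁ t₂ r ts (ih _ h1 _ le_rfl)

lemma codes_node_cons (t₁ t₂ : PlanarTree) (r ts : List PlanarTree) :
    codes (.node t₁ t₂ r :: ts) = (r.length + 2) :: codes (t₁ :: t₂ :: (r ++ ts)) := by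
  simp [code_node, codes_append]

lemma length_codes : ∀ ts : List PlanarTree, (codes ts).length = (codes ts).sum + ts.length := by
  apply list_ind
  · simp
  · intro ts ih
    simp only [codes_cons, code_leaf, List.length_append, List.sum_append,
      List.length_cons, List.sum_cons, List.length_nil, List.sum_nil] at *
    omega
  · intro t₁ t₂ r ts ih
    rw [codes_node_cons]
    simp only [List.length_cons, List.sum_cons, List.length_append] at *
    omega

lemma mem_codes : ∀ ts : List PlanarTree, ∀ x ∈ codes ts, x = 0 ∨ 2 ≤ x := by
  apply list_ind
  · simp
  · intro ts ih x hx
    simp only [codes_cons, code_leaf, List.mem_append, List.mem_singleton] at hx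
    rcases hx with h | h
    · left; exact h
    · exact ih x h
  · intro t₁ t₂ r ts ih x hx
    rw [codes_node_cons] at hx
    rcases List.mem_cons.mp hx with h | h
    · right; omega
    · exact ih x h

lemma count_zero_codes : ∀ ts : List PlanarTree,
    List.count 0 (codes ts) = (ts.map leaves).sum := by
  apply list_ind
  · simp
  · intro ts ih
    simp only [codes_cons, code_leaf, List.count_append, List.map_cons, List.sum_cons, ih, leaves]
    simp
  · intro t₁ t₂ r ts ih
    rw [codes_node_cons]
    rw [List.count_cons]
    simp only [ih, List.map_cons, List.map_append, List.sum_cons, List.sum_append, leaves_node]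
    have : ((r.length + 2 : ℕ) = 0) = False := by simp
    simp [this]
    omega

lemma count_codes (k : ℕ) (hk : 1 ≤ k) : ∀ ts : List PlanarTree,
    List.count k (codes ts) = (ts.map (arityCount k)).sum := by
  apply list_ind
  · simp
  · intro ts ih
    simp only [codes_cons, code_leaf, List.count_append, List.map_cons, List.sum_cons, ih]
    have : ((0:ℕ) = k) = False := eq_false (by omega)
    rw [List.count_singleton']
    simp [this, arityCount]
  · intro t₁ t₂ r ts ih
    rw [codes_node_cons, List.count_cons]
    simp only [ih, List.map_cons, List.map_append, List.sum_cons, List.sum_append,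
      arityCount_node]
    by_cases h : r.length + 2 = k <;> simp [h] <;> omega

end PlanarTree

/-- Balanced word: starting from `m` pending trees, the word is exactly consumed. -/
def Bal : ℕ → List ℕ → Prop
  | m, [] => m = 0
  | m, x :: l => 0 < m ∧ Bal (m - 1 + x) l

@[simp] lemma bal_nil (m : ℕ) : Bal m [] ↔ m = 0 := Iff.rfl
@[simp] lemma bal_cons (m x : ℕ) (l : List ℕ) :
    Bal m (x :: l) ↔ 0 < m ∧ Bal (m - 1 + x) l := Iff.rfl

lemma Bal.append {m₁ m₂ : ℕ} {l₁ l₂ : List ℕ} (h₁ : Bal m₁ l₁) (h₂ : Bal m₂ l₂) :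
    Bal (m₁ + m₂) (l₁ ++ l₂) := by
  induction l₁ generalizing m₁ with
  | nil => simp only [bal_nil] at h₁; simpa [h₁]
  | cons x l ih =>
    obtain ⟨hm, hb⟩ := h₁
    refine ⟨by omega, ?_⟩
    have := ih hb
    have he : m₁ + m₂ - 1 + x = m₁ - 1 + x + m₂ := by omega
    rw [he]
    exact this

namespace PlanarTree

lemma bal_codes : ∀ ts : List PlanarTree, Bal ts.length (codes ts) := by
  apply list_ind
  · simp [codes]
  · intro ts ih
    simp only [codes_cons, code_leaf, List.length_cons]
    have : Bal 1 [0] := by simp [Bal]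
    have := this.append ih
    simpa [Nat.add_comm] using this
  · intro t₁ t₂ r ts ih
    rw [codes_node_cons]
    refine ⟨by simp, ?_⟩
    simp only [List.length_cons, List.length_append] at ih ⊢
    have he : ts.length + 1 - 1 + (r.length + 2) = r.length + ts.length + 1 + 1 := by omega
    rw [he]
    exact ih

lemma code_ne_nil (t : PlanarTree) : t.code ≠ [] := by
  cases t with
  | leaf => rw [code_leaf]; simp
  | node t₁ t₂ r => rw [code_node]; simp

lemma codes_inj : ∀ ts us : List PlanarTree,
    ts.length = us.length → codes ts = codes us → ts = us := by
  apply list_ind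
  · intro us hl _
    exact (List.length_eq_zero_iff.mp hl.symm).symm
  · intro ts ih us hl hc
    match us with
    | [] => simp at hl
    | .leaf :: us =>
      simp only [codes_cons, code_leaf, List.cons_append, List.nil_append,
        List.cons.injEq] at hc
      rw [ih us (by simpa using hl) hc.2]
    | .node u₁ u₂ q :: us =>
      rw [codes_node_cons] at hc
      simp only [codes_cons, code_leaf, List.cons_append, List.nil_append,
        List.cons.injEq] at hc
      omega
  · intro t₁ t₂ r ts ih us hl hc
    match us with
    | [] => simp at hl
    | .leaf :: us =>
      rw [codes_node_cons] at hc
      simp only [codes_cons, code_leaf, List.cons_append, List.nil_append,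
        List.cons.injEq] at hc
      omega
    | .node u₁ u₂ q :: us =>
      rw [codes_node_cons, codes_node_cons] at hc
      simp only [List.cons.injEq] at hc
      obtain ⟨hlen, hc⟩ := hc
      have hq : r.length = q.length := by omega
      have hl' : (t₁ :: t₂ :: (r ++ ts)).length = (u₁ :: u₂ :: (q ++ us)).length := by
        simp only [List.length_cons, List.length_append] at hl ⊢
        omega
      have := ih _ hl' hc
      simp only [List.cons.injEq] at this
      obtain ⟨h1, h2, h3⟩ := this
      have := List.append_inj h3 (by omega)
      simp [h1, h2, this.1, this.2]

/-- decoding: every balanced 1-free word is the code of a list of trees -/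
lemma exists_trees_aux : ∀ n (l : List ℕ), l.length ≤ n → (∀ x ∈ l, x ≠ 1) → ∀ m, Bal m l →
    ∃ ts : List PlanarTree, ts.length = m ∧ codes ts = l := by
  intro n
  induction n using Nat.strong_induction_on with
  | _ n ih =>
    intro l hln h1 m hb
    match l with
    | [] =>
      simp only [bal_nil] at hb
      exact ⟨[], by simp [hb]⟩
    | x :: l =>
      obtain ⟨hm, hb⟩ := hb
      have hlt : l.length < n := by simp at hln; omega
      obtain ⟨ts, hts, hcodes⟩ := ih l.length hlt l le_rfl
        (fun y hy => h1 y (List.mem_cons_of_mem _ hy)) _ hb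
      rcases Nat.eq_zero_or_pos x with hx | hx
      · -- x = 0 : leaf
        subst hx
        refine ⟨.leaf :: ts, by simp; omega, ?_⟩
        simp [codes_cons, code_leaf, hcodes]
      · have hx2 : 2 ≤ x := by
          have := h1 x (List.mem_cons_self); omega
        obtain ⟨c, d, hcd, hclen⟩ : ∃ c d, c ++ d = ts ∧ c.length = x :=
          ⟨ts.take x, ts.drop x, List.take_append_drop x ts, by rw [List.length_take]; omega⟩
        match c, hclen with
        | [], hclen => simp at hclen; omega
        | [t], hclen => simp at hclen; omega
        | t₁ :: t₂ :: r, hclen =>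
          refine ⟨.node t₁ t₂ r :: d, ?_, ?_⟩
          · have : (t₁ :: t₂ :: r).length + d.length = ts.length := by
              rw [← hcd, List.length_append]
            simp only [List.length_cons] at *
            omega
          · rw [codes_node_cons]
            have h2 : t₁ :: t₂ :: (r ++ d) = (t₁ :: t₂ :: r) ++ d := by simp
            simp only [List.length_cons] at hclen
            have h3 : r.length + 2 = x := by omega
            rw [h2, hcd, hcodes, h3]

end PlanarTree

lemma bal_iff (l : List ℕ) : ∀ m, Bal m l ↔
    (l.length = l.sum + m ∧ ∀ k < l.length, k < (l.take k).sum + m) := by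
  induction l with
  | nil => intro m; simp [eq_comm]
  | cons x l ih =>
    intro m
    rw [bal_cons, ih]
    constructor
    · rintro ⟨hm, hlen, hpref⟩
      refine ⟨by simp only [List.length_cons, List.sum_cons]; omega, ?_⟩
      intro k hk
      match k with
      | 0 => simpa using hm
      | k + 1 =>
        rw [List.take_succ_cons, List.sum_cons]
        have := hpref k (by simpa using hk)
        omega
    · rintro ⟨hlen, hpref⟩
      have hm : 0 < m := by
        have := hpref 0 (by simp)
        simpa using this
      refine ⟨hm, by simp only [List.length_cons, List.sum_cons] at hlen; omega, ?_⟩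
      intro k hk
      have := hpref (k + 1) (by simpa using hk)
      rw [List.take_succ_cons, List.sum_cons] at this
      omega

/-! ## The cycle lemma -/

/-- prefix sums shifted: `pref l k = (sum of first k entries) - k`. -/
def pref (l : List ℕ) (k : ℕ) : ℤ := ((l.take k).sum : ℤ) - k

@[simp] lemma pref_zero (l : List ℕ) : pref l 0 = 0 := by simp [pref]

lemma pref_length (l : List ℕ) : pref l l.length = (l.sum : ℤ) - l.length := by
  simp [pref]

lemma sum_take_add (l : List ℕ) (r k : ℕ) :
    (l.take (r + k)).sum = (l.take r).sum + ((l.drop r).take k).sum := by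
  rw [List.take_add, List.sum_append]

lemma pref_rotate_low {l : List ℕ} {r k : ℕ} (hr : r ≤ l.length) (hk : k ≤ l.length - r) :
    pref (l.rotate r) k = pref l (r + k) - pref l r := by
  rw [List.rotate_eq_drop_append_take hr]
  have h1 : (List.drop r l ++ List.take r l).take k = (List.drop r l).take k := by
    rw [List.take_append_of_le_length]
    rw [List.length_drop]; omega
  rw [pref, h1]
  have := sum_take_add l r k
  simp only [pref]
  omega

lemma pref_rotate_high {l : List ℕ} {r k : ℕ} (hr : r ≤ l.length) (hk1 : l.length - r ≤ k)
    (hk2 : k ≤ l.length) :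
    pref (l.rotate r) k = pref l (k - (l.length - r)) + pref l l.length - pref l r := by
  set L := l.length with hL
  set j := k - (L - r) with hj
  have hjr : j ≤ r := by omega
  rw [List.rotate_eq_drop_append_take hr]
  have hdlen : (List.drop r l).length = L - r := by rw [List.length_drop]
  have h1 : (List.drop r l ++ List.take r l).take k
      = List.drop r l ++ (List.take r l).take j := by
    have : k = (List.drop r l).length + j := by rw [hdlen]; omega
    rw [this, List.take_length_add_append]
  have h2 : (List.take r l).take j = List.take j l := by
    rw [List.take_take, min_eq_left hjr]
  have h3 : (List.take r l).sum + (List.drop r l).sum = l.sum := by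
    rw [← List.sum_append, List.take_append_drop]
  rw [pref, h1, h2, List.sum_append]
  simp only [pref, List.take_length, ← hL]
  have htl : (l.take L).sum = l.sum := by rw [hL, List.take_length]
  omega

/-- The rotation by `r` is a "good" word (all prefix sums nonnegative). -/
def GoodRot (l : List ℕ) (r : ℕ) : Prop := ∀ k < l.length, 0 ≤ pref (l.rotate r) k

/-- The **cycle lemma**: a word of total sum `length - 1` has exactly one good rotation. -/
theorem cycle_unique (l : List ℕ) (hsum : l.sum + 1 = l.length) :
    ∃! r, r < l.length ∧ GoodRot l r := by
  set L := l.length with hL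
  have hL1 : 1 ≤ L := by omega
  have hSL : pref l L = -1 := by
    rw [hL, pref_length]; omega
  have hS0 : pref l 0 = 0 := pref_zero l
  set M : ℕ → Prop := fun u => u ∈ Finset.Icc 1 L ∧ (∀ j ∈ Finset.Icc 1 L, pref l u ≤ pref l j)
      ∧ ∀ i ∈ Finset.Icc 1 L, i < u → pref l u < pref l i with hM
  -- uniqueness of M
  have Muniq : ∀ u u', M u → M u' → u = u' := by
    rintro u u' ⟨hu1, hu2, hu3⟩ ⟨hv1, hv2, hv3⟩
    rcases lt_trichotomy u u' with h | h | h
    · have h1 := hv3 u hu1 h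
      have h2 := hu2 u' hv1
      omega
    · exact h
    · have h1 := hu3 u' hv1 h
      have h2 := hv2 u hu1
      omega
  -- existence of M
  have Mex : ∃ u, M u := by
    have hne : (Finset.Icc 1 L).Nonempty := ⟨1, by simp; omega⟩
    have hQ : ∃ u, u ∈ Finset.Icc 1 L ∧ ∀ j ∈ Finset.Icc 1 L, pref l u ≤ pref l j := by
      obtain ⟨u, hu, hmin⟩ := Finset.exists_min_image (Finset.Icc 1 L) (pref l) hne
      exact ⟨u, hu, hmin⟩
    obtain ⟨h1, h2⟩ := Nat.find_spec hQ
    refine ⟨Nat.find hQ, h1, h2, ?_⟩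
    intro i hi hiu
    have hni := Nat.find_min hQ hiu
    simp only [hi, true_and, not_forall] at hni
    obtain ⟨j, hj, hij⟩ := hni
    have := h2 j hj
    omega
  -- key equivalence
  have key : ∀ r < L, ((r < L ∧ GoodRot l r) ↔ M (if r = 0 then L else r)) := by
    intro r hrL
    have hr : r ≤ L := le_of_lt hrL
    rcases Nat.eq_zero_or_pos r with rfl | hr1
    · rw [if_pos rfl]
      constructor
      · rintro ⟨-, hgood⟩
        refine ⟨by simp; omega, ?_, ?_⟩
        · intro j hj
          simp only [Finset.mem_Icc] at hj
          rcases Nat.lt_or_ge j L with h | h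
          · have := hgood j h
            rw [List.rotate_zero] at this
            omega
          · have : j = L := by omega
            simp [this]
        · intro i hi hiL
          simp only [Finset.mem_Icc] at hi
          have := hgood i hiL
          rw [List.rotate_zero] at this
          omega
      · rintro ⟨h1, h2, h3⟩
        refine ⟨hrL, ?_⟩
        intro k hk
        rw [List.rotate_zero]
        rcases Nat.eq_zero_or_pos k with rfl | hk1
        · omega
        · have := h3 k (by simp; omega) hk
          omega
    · have hrne : r ≠ 0 := by omega
      simp only [if_neg hrne]
      constructor
      · rintro ⟨-, hgood⟩
        have hstrict : ∀ i ∈ Finset.Icc 1 L, i < r → pref l r < pref l i := by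
          intro i hi hir
          simp only [Finset.mem_Icc] at hi
          have hk1 : L - r ≤ i + (L - r) := by omega
          have hk2 : i + (L - r) ≤ L := by omega
          have hklt : i + (L - r) < L := by omega
          have := hgood (i + (L - r)) hklt
          rw [pref_rotate_high hr hk1 hk2] at this
          have he : i + (L - r) - (L - r) = i := by omega
          rw [he] at this
          rw [← hL] at this
          omega
        refine ⟨by simp; omega, ?_, hstrict⟩
        intro j hj
        simp only [Finset.mem_Icc] at hj
        rcases Nat.lt_or_ge j r with h | h
        · have := hstrict j (by simp; omega) h
          omega
        · have hk : j - r ≤ L - r := by omega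
          have hklt : j - r < L := by omega
          have := hgood (j - r) hklt
          rw [pref_rotate_low hr hk] at this
          have he : r + (j - r) = j := by omega
          rw [he] at this
          omega
      · rintro ⟨h1, h2, h3⟩
        refine ⟨hrL, ?_⟩
        intro k hk
        rcases le_or_gt k (L - r) with h | h
        · rw [pref_rotate_low hr h]
          have := h2 (r + k) (by simp; omega)
          omega
        · have hk1 : L - r ≤ k := le_of_lt h
          have hk2 : k ≤ L := le_of_lt hk
          rw [pref_rotate_high hr hk1 hk2, ← hL]
          have hj1 : 1 ≤ k - (L - r) := by omega
          have hj2 : k - (L - r) < r := by omega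
          have := h3 (k - (L - r)) (by simp; omega) hj2
          omega
  obtain ⟨u, hu⟩ := Mex
  have huIcc : u ∈ Finset.Icc 1 L := hu.1
  simp only [Finset.mem_Icc] at huIcc
  refine ⟨if u = L then 0 else u, ?_, ?_⟩
  · rcases eq_or_ne u L with rfl | hne
    · simp only [if_pos rfl]
      have : (0 : ℕ) < L := by omega
      exact (key 0 this).mpr (by simpa using hu)
    · simp only [if_neg hne]
      have hltL : u < L := by omega
      refine (key u hltL).mpr ?_
      have : u ≠ 0 := by omega
      simpa [this] using hu
  · intro r' hr'
    have hrL := hr'.1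
    have hM' := (key r' hrL).mp hr'
    have hite := Muniq _ _ hM' hu
    rcases eq_or_ne r' 0 with rfl | hne
    · rw [if_pos rfl] at hite
      rw [← hite, if_pos rfl]
    · rw [if_neg hne] at hite
      have hune : u ≠ L := by omega
      rw [if_neg hune]
      exact hite

/-! ## Counting functions with prescribed fiber cardinalities -/

open MulAction in
theorem card_fiber_class {ι : Type*} [Fintype ι] [DecidableEq ι] {L : ℕ} (f₀ : Fin L → ι) :
    Nat.card {f : Fin L → ι // ∀ i, Fintype.card {a // f a = i} = Fintype.card {a // f₀ a = i}}
      * ∏ i, (Fintype.card {a // f₀ a = i}).factorial = L.factorial := by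
  classical
  have orbit_eq : orbit (Equiv.Perm (Fin L))ᵈᵐᵃ f₀
      = {f | ∀ i, Fintype.card {a // f a = i} = Fintype.card {a // f₀ a = i}} := by
    ext f
    constructor
    · rintro ⟨g, rfl⟩
      intro i
      exact Fintype.card_congr (Equiv.subtypeEquiv (DomMulAct.mk.symm g : Equiv.Perm (Fin L))
        (fun a => Iff.rfl))
    · intro h
      refine ⟨DomMulAct.mk ((Equiv.sigmaFiberEquiv f).symm.trans
        ((Equiv.sigmaCongrRight (fun i => Fintype.equivOfCardEq (h i))).trans
          (Equiv.sigmaFiberEquiv f₀))), ?_⟩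
      funext a
      exact (Fintype.equivOfCardEq (h (f a)) ⟨a, rfl⟩).2
  haveI : Fintype ((Equiv.Perm (Fin L))ᵈᵐᵃ) := Fintype.ofEquiv _ DomMulAct.mk
  haveI : Fintype (orbit (Equiv.Perm (Fin L))ᵈᵐᵃ f₀) := by
    rw [orbit_eq]; exact Fintype.ofFinite _
  have hOS := card_orbit_mul_card_stabilizer_eq_card_group (Equiv.Perm (Fin L))ᵈᵐᵃ f₀
  have hstab : Fintype.card (stabilizer (Equiv.Perm (Fin L))ᵈᵐᵃ f₀)
      = ∏ i, (Fintype.card {a // f₀ a = i}).factorial := by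
    rw [← DomMulAct.stabilizer_card f₀]
    exact Fintype.card_congr (Equiv.subtypeEquiv
      (DomMulAct.mk.symm : (Equiv.Perm (Fin L))ᵈᵐᵃ ≃ Equiv.Perm (Fin L))
      (fun g => DomMulAct.mem_stabilizer_iff))
  have hG : Fintype.card ((Equiv.Perm (Fin L))ᵈᵐᵃ) = L.factorial := by
    rw [Fintype.card_congr
      (DomMulAct.mk.symm : (Equiv.Perm (Fin L))ᵈᵐᵃ ≃ Equiv.Perm (Fin L)),
      Fintype.card_perm, Fintype.card_fin]
  have horb : Nat.card {f : Fin L → ι //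
      ∀ i, Fintype.card {a // f a = i} = Fintype.card {a // f₀ a = i}}
      = Fintype.card (orbit (Equiv.Perm (Fin L))ᵈᵐᵃ f₀) := by
    rw [← Nat.card_eq_fintype_card]
    exact Nat.card_congr (Equiv.setCongr orbit_eq).symm
  rw [horb, ← hstab, hOS, hG]

section Words

variable {A : Type*} [Fintype A] [DecidableEq A]

lemma count_ofFn {L : ℕ} (f : Fin L → A) (b : A) :
    (List.ofFn f).count b = Fintype.card {a // f a = b} := by
  classical
  rw [Fintype.card_subtype]
  have h1 : ((List.ofFn f : List A) : Multiset A) = Finset.univ.val.map f := by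
    rw [Fin.univ_val_map]
  have h2 : (List.ofFn f).count b = Multiset.count b ((List.ofFn f : List A) : Multiset A) := by
    simp
  rw [h2, h1, Multiset.count_map]
  rw [Finset.card_def, Finset.filter_val,
    Multiset.filter_congr (fun a _ => (eq_comm : b = f a ↔ f a = b))]

lemma ofFn_get_cast (w : List A) {L : ℕ} (h : w.length = L) :
    List.ofFn (fun a : Fin L => w.get (Fin.cast h.symm a)) = w := by
  apply List.ext_getElem (by simp [h])
  intro i h1 h2
  simp [List.getElem_ofFn, List.get_eq_getElem]

lemma count_get_fiber (w : List A) {L : ℕ} (h : w.length = L) (b : A) :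
    Fintype.card {a : Fin L // w.get (Fin.cast h.symm a) = b} = w.count b := by
  rw [← count_ofFn, ofFn_get_cast w h]

theorem card_perm_class (w₀ : List A) :
    Nat.card {w : List A // w.Perm w₀} * ∏ b : A, (w₀.count b).factorial
      = (w₀.length).factorial := by
  classical
  set L := w₀.length with hL
  set f₀ : Fin L → A := fun a => w₀.get (Fin.cast rfl a) with hf₀
  have hfib₀ : ∀ b, Fintype.card {a // f₀ a = b} = w₀.count b := fun b =>
    count_get_fiber w₀ rfl b
  have E : {w : List A // w.Perm w₀} ≃
      {f : Fin L → A // ∀ b, Fintype.card {a // f a = b} = Fintype.card {a // f₀ a = b}} := by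
    refine
    { toFun := fun w => ⟨fun a => w.1.get (Fin.cast (w.2.length_eq.symm : L = w.1.length) a), ?_⟩
      invFun := fun f => ⟨List.ofFn f.1, ?_⟩
      left_inv := ?_
      right_inv := ?_ }
    · intro b
      rw [count_get_fiber w.1 w.2.length_eq b, hfib₀]
      exact (List.perm_iff_count.mp w.2) b
    · rw [List.perm_iff_count]
      intro b
      rw [count_ofFn, f.2 b, hfib₀]
    · intro w
      exact Subtype.ext (ofFn_get_cast w.1 w.2.length_eq)
    · intro f
      apply Subtype.ext
      funext a
      simp only []
      rw [List.get_ofFn]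
      congr 1 <;> simp [Fin.ext_iff]
  rw [Nat.card_congr E]
  have := card_fiber_class f₀
  rw [← this]
  congr 1
  exact Finset.prod_congr rfl fun b _ => by rw [hfib₀]

end Words

section CountSum

variable {A : Type*} [Fintype A] [DecidableEq A]

lemma length_eq_sum_count (w : List A) : w.length = ∑ b : A, w.count b := by
  induction w with
  | nil => simp
  | cons a w ih =>
    simp only [List.length_cons, List.count_cons, ih]
    rw [Finset.sum_add_distrib]
    congr 1
    simp

lemma sum_map_count (val : A → ℕ) (w : List A) :
    (w.map val).sum = ∑ b : A, w.count b * val b := by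
  induction w with
  | nil => simp
  | cons a w ih =>
    simp only [List.map_cons, List.sum_cons, List.count_cons, beq_iff_eq, add_mul, ite_mul,
      one_mul, zero_mul, Finset.sum_add_distrib, ih, Finset.sum_ite_eq, Finset.sum_ite_eq',
      Finset.mem_univ, if_true]
    exact add_comm _ _

end CountSum

lemma bal_rotate_iff {l : List ℕ} (hs : l.sum + 1 = l.length) (r : ℕ) :
    Bal 1 (l.rotate r) ↔ GoodRot l r := by
  have hlen : (l.rotate r).length = l.length := List.length_rotate l r
  have hsum : (l.rotate r).sum = l.sum := (List.rotate_perm l r).sum_eq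
  rw [bal_iff]
  unfold GoodRot pref
  constructor
  · rintro ⟨-, h2⟩ k hk
    have := h2 k (by omega)
    omega
  · intro h
    refine ⟨by omega, ?_⟩
    intro k hk
    have := h k (by omega)
    omega

namespace Corolla

/-- the alphabet: `none` = leaf, `some i` = internal node with `i+2` children -/
abbrev Al (n : ℕ) := Option (Fin (n - 1))

def val (n : ℕ) : Al n → ℕ
  | none => 0
  | some i => (i : ℕ) + 2

@[simp] lemma val_none (n : ℕ) : val n none = 0 := rfl
@[simp] lemma val_some (n : ℕ) (i : Fin (n - 1)) : val n (some i) = (i : ℕ) + 2 := rfl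

lemma val_injective (n : ℕ) : Function.Injective (val n) := by
  rintro (_ | a) (_ | b) h <;> simp only [val_none, val_some] at h
  · rfl
  · omega
  · omega
  · exact congrArg some (Fin.ext (by omega))

lemma val_le (n : ℕ) (b : Al n) : val n b ≤ n := by
  match b with
  | none => simp
  | some i => have := i.isLt; simp; omega

def dec (n : ℕ) (k : ℕ) : Al n :=
  if h : 2 ≤ k ∧ k ≤ n then some ⟨k - 2, by omega⟩ else none

lemma dec_val (n : ℕ) (b : Al n) : dec n (val n b) = b := by
  match b with
  | none => simp [dec, val]
  | some i =>
    have h1 : (i : ℕ) < n - 1 := i.isLt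
    simp only [val_some, dec]
    exact (dif_pos (show 2 ≤ (i : ℕ) + 2 ∧ (i : ℕ) + 2 ≤ n by omega)).trans
      (congrArg some (Fin.ext (by simp)))

lemma val_dec (n : ℕ) (k : ℕ) (hk : k = 0 ∨ (2 ≤ k ∧ k ≤ n)) : val n (dec n k) = k := by
  rcases hk with rfl | hk
  · simp [dec]
  · simp only [dec]
    rw [dif_pos hk]
    simp only [val_some]
    omega

variable (n : ℕ) (lam : Fin (n - 1) → ℕ) (N : ℕ)

def w0 : List (Al n) :=
  List.replicate N none ++ (List.finRange (n - 1)).flatMap fun i => List.replicate (lam i) (some i)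

lemma count_w0_none : (w0 n lam N).count none = N := by
  rw [w0, List.count_append, List.count_replicate_self]
  have h : List.count (none : Al n)
      ((List.finRange (n - 1)).flatMap fun i => List.replicate (lam i) (some i)) = 0 := by
    rw [List.count_eq_zero]
    intro h
    obtain ⟨i, -, hi⟩ := List.mem_flatMap.mp h
    exact Option.some_ne_none i (List.eq_of_mem_replicate hi).symm
  omega

lemma count_w0_some (i : Fin (n - 1)) : (w0 n lam N).count (some i) = lam i := by
  rw [w0, List.count_append, List.count_flatMap]
  have h0 : List.count (some i) (List.replicate N (none : Al n)) = 0 := by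
    rw [List.count_replicate]
    simp
  rw [h0]
  have : ∀ j : Fin (n - 1), (List.count (some i) ∘ fun j => List.replicate (lam j) (some j)) j
      = if j = i then lam j else 0 := by
    intro j
    simp only [Function.comp_apply, List.count_replicate]
    by_cases h : j = i <;> simp [h]
  rw [List.map_congr_left (fun j _ => this j), ← Fin.sum_univ_def]
  simp

lemma length_w0 : (w0 n lam N).length = N + ∑ i, lam i := by
  rw [w0, List.length_append, List.length_replicate, List.length_flatMap]
  congr 1
  have : ∀ j : Fin (n - 1), (List.length ∘ fun j => List.replicate (lam j) (some j : Al n)) j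
      = lam j := fun j => by simp
  simp only [List.length_replicate]; rw [← Fin.sum_univ_def]

end Corolla

namespace PlanarTree

lemma codes_singleton (t : PlanarTree) : codes [t] = t.code := by simp [codes]

lemma count_code {k : ℕ} (hk : 1 ≤ k) (t : PlanarTree) :
    t.code.count k = t.arityCount k := by
  have := count_codes k hk [t]
  rw [codes_singleton] at this
  simpa using this

lemma count_code_zero (t : PlanarTree) : t.code.count 0 = t.leaves := by
  have := count_zero_codes [t]
  rw [codes_singleton] at this
  simpa using this

lemma length_code (t : PlanarTree) : t.code.length = t.code.sum + 1 := by
  have := length_codes [t]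
  rwa [codes_singleton] at this

lemma bal_code (t : PlanarTree) : Bal 1 t.code := by
  have := bal_codes [t]
  rwa [codes_singleton] at this

lemma code_injective {t t' : PlanarTree} (h : t.code = t'.code) : t = t' := by
  have := codes_inj [t] [t'] rfl (by rw [codes_singleton, codes_singleton, h])
  simpa using this

lemma mem_code {t : PlanarTree} {x : ℕ} (hx : x ∈ t.code) : x = 0 ∨ 2 ≤ x :=
  mem_codes [t] x (by rwa [codes_singleton])

end PlanarTree

namespace Corolla

open PlanarTree

variable (n : ℕ) (lam : Fin (n - 1) → ℕ) (N : ℕ)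

def Prof (t : PlanarTree) : Prop :=
  (∀ i : Fin (n - 1), t.arityCount ((i : ℕ) + 2) = lam i) ∧ ∀ k, n < k → t.arityCount k = 0

variable {n lam} {N}

lemma mem_code_of_prof {t : PlanarTree} (ht : Prof n lam t) :
    ∀ x ∈ t.code, x = 0 ∨ (2 ≤ x ∧ x ≤ n) := by
  intro x hx
  rcases mem_code hx with rfl | h2
  · exact Or.inl rfl
  · refine Or.inr ⟨h2, ?_⟩
    by_contra hlt
    have h0 := ht.2 x (by omega)
    rw [← count_code (by omega) t] at h0
    exact (List.count_eq_zero.mp h0) hx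

def word (n : ℕ) (t : PlanarTree) : List (Al n) := t.code.map (dec n)

lemma map_val_word {t : PlanarTree} (ht : Prof n lam t) :
    (word n t).map (val n) = t.code := by
  rw [word, List.map_map]
  have h : ∀ x ∈ t.code, (val n ∘ dec n) x = id x :=
    fun x hx => val_dec n x (mem_code_of_prof ht x hx)
  rw [List.map_congr_left h, List.map_id]

lemma count_word {t : PlanarTree} (ht : Prof n lam t) (b : Al n) :
    (word n t).count b = t.code.count (val n b) := by
  rw [← map_val_word ht, List.count_map_of_injective _ _ (val_injective n)]

lemma bal_word {t : PlanarTree} (ht : Prof n lam t) : Bal 1 ((word n t).map (val n)) := by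
  rw [map_val_word ht]; exact bal_code t

lemma leaves_of_prof {t : PlanarTree} (ht : Prof n lam t)
    (hN : N = 1 + ∑ i : Fin (n - 1), ((i : ℕ) + 1) * lam i) : t.leaves = N := by
  set w := word n t with hw
  have hlen : w.length = ∑ b : Al n, w.count b := length_eq_sum_count w
  have hsum : (w.map (val n)).sum = ∑ b : Al n, w.count b * val n b := sum_map_count _ w
  have hlc : t.code.length = t.code.sum + 1 := length_code t
  have hwc : w.map (val n) = t.code := map_val_word ht
  have hwl : w.length = t.code.length := by rw [← hwc, List.length_map]
  have hnone : w.count none = t.leaves := by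
    rw [count_word ht, val_none, count_code_zero]
  have hsome : ∀ i, w.count (some i) = lam i := by
    intro i
    rw [count_word ht, val_some, count_code (by omega) t]
    exact ht.1 i
  rw [Fintype.sum_option] at hlen
  rw [Fintype.sum_option] at hsum
  simp only [hnone, hsome, val_none, val_some, Nat.mul_zero, Nat.zero_add] at hlen hsum
  have hsplit : ∑ i : Fin (n - 1), lam i * ((i : ℕ) + 2)
      = (∑ i : Fin (n - 1), ((i : ℕ) + 1) * lam i) + ∑ i : Fin (n - 1), lam i := by
    rw [← Finset.sum_add_distrib]
    exact Finset.sum_congr rfl fun i _ => by ring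
  rw [hwc] at hsum
  omega

lemma word_perm_w0 {t : PlanarTree} (ht : Prof n lam t)
    (hN : N = 1 + ∑ i : Fin (n - 1), ((i : ℕ) + 1) * lam i) :
    (word n t).Perm (w0 n lam N) := by
  rw [List.perm_iff_count]
  intro b
  match b with
  | none =>
    rw [count_w0_none, count_word ht, val_none, count_code_zero, leaves_of_prof ht hN]
  | some i =>
    rw [count_w0_some, count_word ht, val_some, count_code (by omega) t]
    exact ht.1 i

lemma word_inj {t t' : PlanarTree} (ht : Prof n lam t) (ht' : Prof n lam t')
    (h : word n t = word n t') : t = t' := by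
  apply code_injective
  rw [← map_val_word ht, ← map_val_word ht', h]

lemma exists_tree_of_word (hn : 2 ≤ n) {w : List (Al n)} (hw : w.Perm (w0 n lam N))
    (hbal : Bal 1 (w.map (val n))) : ∃ t : PlanarTree, Prof n lam t ∧ word n t = w := by
  have h1 : ∀ x ∈ w.map (val n), x ≠ 1 := by
    intro x hx
    obtain ⟨b, -, rfl⟩ := List.mem_map.mp hx
    match b with
    | none => simp
    | some i => simp
  obtain ⟨ts, hlen, hcodes⟩ :=
    exists_trees_aux (w.map (val n)).length _ le_rfl h1 1 hbal
  match ts, hlen with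
  | [t], _ =>
    have hcode : t.code = w.map (val n) := by rw [← codes_singleton]; exact hcodes
    have hcw : ∀ b : Al n, t.code.count (val n b) = w.count b := by
      intro b
      rw [hcode, List.count_map_of_injective _ _ (val_injective n)]
    have hprof : Prof n lam t := by
      constructor
      · intro i
        rw [← count_code (by omega) t]
        have := hcw (some i)
        rw [val_some] at this
        rw [this, List.perm_iff_count.mp hw, count_w0_some]
      · intro k hk
        rw [← count_code (by omega) t, hcode, List.count_eq_zero]
        intro hmem
        obtain ⟨b, -, hb⟩ := List.mem_map.mp hmem
        have := val_le n b
        omega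
    refine ⟨t, hprof, ?_⟩
    rw [word, hcode, List.map_map]
    have h2 : ∀ b ∈ w, (dec n ∘ val n) b = id b := fun b _ => dec_val n b
    rw [List.map_congr_left h2, List.map_id]

end Corolla

namespace Corolla

variable {n : ℕ} {lam : Fin (n - 1) → ℕ} {N : ℕ}

lemma sum_split : ∑ i : Fin (n - 1), lam i * ((i : ℕ) + 2)
    = (∑ i : Fin (n - 1), ((i : ℕ) + 1) * lam i) + ∑ i : Fin (n - 1), lam i := by
  rw [← Finset.sum_add_distrib]
  exact Finset.sum_congr rfl fun i _ => by ring

lemma sum_len_w0 (hN : N = 1 + ∑ i : Fin (n - 1), ((i : ℕ) + 1) * lam i) :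
    ((w0 n lam N).map (val n)).sum + 1 = (w0 n lam N).length := by
  rw [sum_map_count, length_eq_sum_count (w0 n lam N), Fintype.sum_option, Fintype.sum_option]
  simp only [count_w0_none, count_w0_some, val_none, val_some, Nat.mul_zero, Nat.zero_add]
  have := sum_split (n := n) (lam := lam)
  omega

lemma sum_len_of_perm (hN : N = 1 + ∑ i : Fin (n - 1), ((i : ℕ) + 1) * lam i)
    {w : List (Al n)} (hw : w.Perm (w0 n lam N)) :
    (w.map (val n)).sum + 1 = (w.map (val n)).length := by
  have h0 := sum_len_w0 hN
  have h1 := (hw.map (val n)).sum_eq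
  have h2 := (hw.map (val n)).length_eq
  simp only [List.length_map] at h0 h1 h2 ⊢
  omega

end Corolla


open Corolla PlanarTree

/-- **Counting trees built from a multiset of corollas.** Fix `n ≥ 2` and natural numbers
`λ₁, …, λ_{n-1}` (here `lam i` is `λ_{i+1}`, counting internal nodes with `i+2` children),
and set `Λ = λ₁ + ⋯ + λ_{n-1}`, `N = 1 + λ₁ + 2λ₂ + ⋯ + (n-1)λ_{n-1}`. The set of planar
rooted trees having exactly `λ_i` internal nodes with `i+1` children (`1 ≤ i ≤ n-1`) and no
internal node with more than `n` children is finite, every such tree has exactly `N`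
leaves, and its cardinality `c` satisfies
`N · c · λ₁!⋯λ_{n-1}! = C(N+Λ-1, Λ) · Λ!`. -/
theorem card_trees_from_corollas (n : ℕ) (hn : 2 ≤ n) (lam : Fin (n - 1) → ℕ)
    (Lam N : ℕ) (hLam : Lam = ∑ i, lam i) (hN : N = 1 + ∑ i : Fin (n - 1), ((i : ℕ) + 1) * lam i) :
    {t : PlanarTree | (∀ i : Fin (n - 1), t.arityCount ((i : ℕ) + 2) = lam i) ∧
        ∀ k, n < k → t.arityCount k = 0}.Finite ∧
      (∀ t : PlanarTree, ((∀ i : Fin (n - 1), t.arityCount ((i : ℕ) + 2) = lam i) ∧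
        ∀ k, n < k → t.arityCount k = 0) → t.leaves = N) ∧
      N * Nat.card {t : PlanarTree |
            (∀ i : Fin (n - 1), t.arityCount ((i : ℕ) + 2) = lam i) ∧
            ∀ k, n < k → t.arityCount k = 0} * ∏ i, Nat.factorial (lam i) =
        Nat.choose (N + Lam - 1) Lam * Nat.factorial Lam := by
  classical
  have hN1 : 1 ≤ N := by omega
  set w₀ : List (Al n) := w0 n lam N with hw₀
  set L : ℕ := w₀.length with hLdef
  have hL : L = N + Lam := by rw [hLdef, hw₀, length_w0, hLam]
  have hLpos : 0 < L := by omega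
  -- the bijection between profiled trees and good words
  have hFbij : Function.Bijective
      (fun t : {t : PlanarTree // Prof n lam t} =>
        (⟨word n t.1, word_perm_w0 t.2 hN, bal_word t.2⟩ :
          {w : List (Al n) // w.Perm w₀ ∧ Bal 1 (w.map (val n))})) := by
    constructor
    · intro t t' h
      exact Subtype.ext (word_inj t.2 t'.2 (congrArg Subtype.val h))
    · rintro ⟨w, hw1, hw2⟩
      obtain ⟨t, ht, hwt⟩ := exists_tree_of_word (N := N) hn hw1 hw2
      exact ⟨⟨t, ht⟩, Subtype.ext hwt⟩
  -- rotating back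
  have hsw : ∀ w : List (Al n), w.Perm w₀ →
      (w.map (val n)).sum + 1 = (w.map (val n)).length := fun w hw =>
    sum_len_of_perm hN hw
  have hback : ∀ (u : List (Al n)) (s : ℕ), s < L → u.length = L →
      (u.rotate s).rotate ((L - s) % L) = u := by
    intro u s hs hu
    rw [List.rotate_rotate]
    rcases Nat.eq_zero_or_pos s with rfl | h0
    · rw [Nat.sub_zero, Nat.mod_self]
      simp
    · have h1 : (L - s) % L = L - s := Nat.mod_eq_of_lt (by omega)
      rw [h1]
      have h2 : s + (L - s) = L := by omega
      rw [h2, ← hu, List.rotate_length]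
  -- the cycle-lemma bijection
  have hΦbij : Function.Bijective
      (fun p : {w : List (Al n) // w.Perm w₀ ∧ Bal 1 (w.map (val n))} × Fin L =>
        (⟨p.1.1.rotate p.2.1, (List.rotate_perm _ _).trans p.1.2.1⟩ :
          {w : List (Al n) // w.Perm w₀})) := by
    constructor
    · rintro ⟨⟨v, hv⟩, r⟩ ⟨⟨v', hv'⟩, r'⟩ heq
      have h : v.rotate r.1 = v'.rotate r'.1 := congrArg Subtype.val heq
      set w := v.rotate r.1 with hwdef
      have hwperm : w.Perm w₀ := (List.rotate_perm _ _).trans hv.1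
      have hsl := hsw w hwperm
      have hlL : (w.map (val n)).length = L := by
        rw [List.length_map, hwperm.length_eq]
      have hvlen : v.length = L := hv.1.length_eq
      have hvlen' : v'.length = L := hv'.1.length_eq
      have hbk : w.rotate ((L - r.1) % L) = v := by
        rw [hwdef]; exact hback v r.1 r.2 hvlen
      have hbk' : w.rotate ((L - r'.1) % L) = v' := by
        rw [h]; exact hback v' r'.1 r'.2 hvlen'
      have hgood : ∀ s : ℕ, w.rotate s = v → GoodRot (w.map (val n)) s := by
        intro s hsv
        apply (bal_rotate_iff hsl s).mp
        rw [← List.map_rotate, hsv]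
        exact hv.2
      have hgood' : GoodRot (w.map (val n)) ((L - r'.1) % L) := by
        apply (bal_rotate_iff hsl _).mp
        rw [← List.map_rotate, hbk']
        exact hv'.2
      obtain ⟨rr, -, huniq⟩ := cycle_unique (w.map (val n)) hsl
      have hs1 : (L - r.1) % L = rr :=
        huniq _ ⟨by rw [hlL]; exact Nat.mod_lt _ hLpos, hgood _ hbk⟩
      have hs2 : (L - r'.1) % L = rr :=
        huniq _ ⟨by rw [hlL]; exact Nat.mod_lt _ hLpos, hgood'⟩
      have hss : (L - r.1) % L = (L - r'.1) % L := by rw [hs1, hs2]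
      have hrr : r.1 = r'.1 := by
        have h1 := r.2
        have h2 := r'.2
        rcases Nat.eq_zero_or_pos r.1 with hz | hp <;>
          rcases Nat.eq_zero_or_pos r'.1 with hz' | hp'
        · rw [hz, hz']
        · rw [hz, Nat.sub_zero, Nat.mod_self, Nat.mod_eq_of_lt (by omega)] at hss
          omega
        · rw [hz', Nat.sub_zero, Nat.mod_self, Nat.mod_eq_of_lt (by omega)] at hss
          omega
        · rw [Nat.mod_eq_of_lt (by omega), Nat.mod_eq_of_lt (by omega)] at hss
          omega
      have hvv : v = v' := by
        rw [← hbk, ← hbk', hrr]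
      apply Prod.ext
      · exact Subtype.ext hvv
      · exact Fin.ext hrr
    · rintro ⟨w, hw⟩
      have hsl := hsw w hw
      obtain ⟨r, ⟨hrlt, hgood⟩, -⟩ := cycle_unique (w.map (val n)) hsl
      have hlL : (w.map (val n)).length = L := by rw [List.length_map, hw.length_eq]
      have hrL : r < L := by omega
      have hbal : Bal 1 ((w.rotate r).map (val n)) := by
        rw [List.map_rotate]
        exact (bal_rotate_iff hsl r).mpr hgood
      refine ⟨⟨⟨w.rotate r, (List.rotate_perm w r).trans hw, hbal⟩,
        ⟨(L - r) % L, Nat.mod_lt _ hLpos⟩⟩, ?_⟩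
      exact Subtype.ext (hback w r hrL hw.length_eq)
  -- cardinalities
  have hcV : Nat.card {t : PlanarTree |
        (∀ i : Fin (n - 1), t.arityCount ((i : ℕ) + 2) = lam i) ∧
        ∀ k, n < k → t.arityCount k = 0}
      = Nat.card {w : List (Al n) // w.Perm w₀ ∧ Bal 1 (w.map (val n))} :=
    Nat.card_congr (Equiv.ofBijective _ hFbij)
  have hcW : Nat.card {w : List (Al n) // w.Perm w₀}
      = Nat.card {w : List (Al n) // w.Perm w₀ ∧ Bal 1 (w.map (val n))} * L := by
    rw [← Nat.card_congr (Equiv.ofBijective _ hΦbij), Nat.card_prod,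
      show Nat.card (Fin L) = L from by rw [Nat.card_eq_fintype_card, Fintype.card_fin]]
  have hWcount := card_perm_class w₀
  have hprod : ∏ b : Al n, (w₀.count b).factorial
      = N.factorial * ∏ i, (lam i).factorial := by
    rw [Fintype.prod_option]
    congr 1
    · rw [hw₀, count_w0_none]
    · exact Finset.prod_congr rfl fun i _ => by rw [hw₀, count_w0_some]
  -- finiteness
  have hWfin : Finite {w : List (Al n) // w.Perm w₀} := by
    have : {w : List (Al n) | w.Perm w₀} ⊆ {w | w ∈ w₀.permutations} :=
      fun w hw => List.mem_permutations.mpr hw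
    exact (((w₀.permutations).finite_toSet).subset this).to_subtype
  have hVfin : Finite {w : List (Al n) // w.Perm w₀ ∧ Bal 1 (w.map (val n))} := by
    have : {w : List (Al n) | w.Perm w₀ ∧ Bal 1 (w.map (val n))} ⊆
        {w | w ∈ w₀.permutations} := fun w hw => List.mem_permutations.mpr hw.1
    exact (((w₀.permutations).finite_toSet).subset this).to_subtype
  have hTCfin : {t : PlanarTree | (∀ i : Fin (n - 1), t.arityCount ((i : ℕ) + 2) = lam i) ∧
      ∀ k, n < k → t.arityCount k = 0}.Finite := by
    rw [← Set.finite_coe_iff]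
    exact Finite.of_equiv _ (Equiv.ofBijective _ hFbij).symm
  refine ⟨hTCfin, fun t ht => leaves_of_prof ht hN, ?_⟩
  -- the arithmetic
  set c := Nat.card {t : PlanarTree |
      (∀ i : Fin (n - 1), t.arityCount ((i : ℕ) + 2) = lam i) ∧
      ∀ k, n < k → t.arityCount k = 0} with hc
  set P := ∏ i, Nat.factorial (lam i) with hP
  have hE : c * L * (N.factorial * P) = L.factorial := by
    rw [hcV, ← hcW, ← hprod, hLdef]
    exact hWcount
  have hfacL : L.factorial = (N + Lam) * (N + Lam - 1).factorial := by
    have h1 : L = (N + Lam - 1) + 1 := by omega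
    rw [h1, Nat.factorial_succ]
    congr 1
    omega
  have hNfact : N.factorial = N * (N - 1).factorial := by
    have h1 : N = (N - 1) + 1 := by omega
    rw [h1, Nat.factorial_succ]
    congr 2 <;> omega
  have h5 : c * (N.factorial * P) = (N + Lam - 1).factorial := by
    apply Nat.eq_of_mul_eq_mul_left (show 0 < N + Lam by omega)
    calc (N + Lam) * (c * (N.factorial * P)) = c * L * (N.factorial * P) := by
          rw [hL]; ring
    _ = L.factorial := hE
    _ = (N + Lam) * (N + Lam - 1).factorial := hfacL
  have hchoose : (N + Lam - 1).choose Lam * Lam.factorial * (N - 1).factorial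
      = (N + Lam - 1).factorial := by
    have h1 : N + Lam - 1 - Lam = N - 1 := by omega
    have := Nat.choose_mul_factorial_mul_factorial (show Lam ≤ N + Lam - 1 by omega)
    rwa [h1] at this
  apply Nat.eq_of_mul_eq_mul_right (Nat.factorial_pos (N - 1))
  calc N * c * P * (N - 1).factorial = c * ((N * (N - 1).factorial) * P) := by ring
  _ = c * (N.factorial * P) := by rw [← hNfact]
  _ = (N + Lam - 1).factorial := h5
  _ = (N + Lam - 1).choose Lam * Lam.factorial * (N - 1).factorial := hchoose.symm
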